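/- arXiv:2404.11487 — 9 statements merged into one kernel-verified Lean document; each statement's English description precedes it below -/
import Mathlib

section
/- Let n ≥ 1 and let A ∈ ℝ^{n×n} be a symmetric positive-definite matrix with rows A_1, …, A_n. For each index i let B_i = A - (A_iᵀ A_i)/A_{ii} be the matrix obtained by one partial Cholesky pivot step at index i. Then the expected squared Frobenius norm under the sampling rule that selects pivot i with probability A_{ii}² / (Σ_{ℓ=1}^n A_{ℓℓ}²) satisfies Σ_{i=1}^n (A_{ii}² / Σ_{ℓ=1}^n A_{ℓℓ}²) ‖B_i‖_F² ≤ ‖A‖_F² - (1 / Σ_{ℓ=1}^n A_{ℓℓ}²) Σ_{i=1}^n ‖A_i‖_{ℓ²}⁴ ≤ (1 - 1/n) ‖A‖_F². -/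
/-- **Frobenius-norm contraction for randomly pivoted partial Cholesky with β = 2.**
If `A` is symmetric positive definite and the pivot `i` is chosen with probability
`A i i ^ 2 / ∑ ℓ, A ℓ ℓ ^ 2`, then the expected squared Frobenius norm of the residual
`B i = A - (A_iᵀ A_i) / A i i` satisfies the stated two inequalities. -/
theorem frobenius_contraction_beta_two (n : ℕ) (hn : 1 ≤ n)
    (A : Matrix (Fin n) (Fin n) ℝ) (hA : A.PosDef)
    (B : Fin n → Matrix (Fin n) (Fin n) ℝ)
    (hB : ∀ i, B i = A - (A i i)⁻¹ • Matrix.vecMulVec (A i) (A i)) :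
    (∑ i, ((A i i) ^ 2 / ∑ ℓ, (A ℓ ℓ) ^ 2) * (∑ j, ∑ k, (B i j k) ^ 2)
        ≤ (∑ j, ∑ k, (A j k) ^ 2)
          - (1 / ∑ ℓ, (A ℓ ℓ) ^ 2) * ∑ i, (∑ k, (A i k) ^ 2) ^ 2) ∧
    ((∑ j, ∑ k, (A j k) ^ 2) - (1 / ∑ ℓ, (A ℓ ℓ) ^ 2) * ∑ i, (∑ k, (A i k) ^ 2) ^ 2
        ≤ (1 - 1 / (n : ℝ)) * ∑ j, ∑ k, (A j k) ^ 2) := by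
  have hsym : ∀ j k, A k j = A j k := fun j k => hA.1.apply j k
  have hdiag : ∀ i, 0 < A i i := by
    intro i
    have hne : (Pi.single i 1 : Fin n → ℝ) ≠ 0 := by
      intro h
      have := congrFun h i
      simp at this
    have := hA.dotProduct_mulVec_pos hne
    simpa [dotProduct, Matrix.mulVec, Pi.single_apply] using this
  set S : ℝ := ∑ ℓ, (A ℓ ℓ)^2 with hSdef
  have hSpos : 0 < S := by
    apply Finset.sum_pos
    · intro i _; exact pow_pos (hdiag i) 2
    · exact Finset.univ_nonempty_iff.mpr ⟨⟨0, hn⟩⟩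
  set r : Fin n → ℝ := fun i => ∑ k, (A i k)^2 with hrdef
  set Q : Fin n → ℝ := fun i => ∑ j, ∑ k, A i j * A j k * A i k with hQdef
  have hrnonneg : ∀ i, 0 ≤ r i := fun i => Finset.sum_nonneg fun k _ => sq_nonneg _
  -- key: r i ^ 2 ≤ A i i * Q i
  have key : ∀ i, (r i)^2 ≤ A i i * Q i := by
    intro i
    set t : ℝ := r i / A i i with htdef
    set v : Fin n → ℝ := fun k => A i k - (if k = i then t else 0) with hvdef
    have hx := hA.posSemidef.dotProduct_mulVec_nonneg v
    have hexp : dotProduct (star v) (A.mulVec v)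
        = Q i - 2 * t * r i + t^2 * A i i := by
      rw [hvdef]
      simp only [dotProduct, Matrix.mulVec, star, Pi.star_apply, star_trivial, id_eq, id]
      have h1 : ∀ j, (∑ k, A j k * (A i k - (if k = i then t else 0)))
          = (∑ k, A j k * A i k) - A j i * t := by
        intro j
        simp [mul_sub, Finset.sum_sub_distrib, mul_ite, mul_zero, Finset.sum_ite_eq']
      simp only [h1]
      have h2 : ∀ j, (A i j - (if j = i then t else 0)) * ((∑ k, A j k * A i k) - A j i * t)
          = A i j * (∑ k, A j k * A i k) - A i j * A j i * t
            - (if j = i then t * ((∑ k, A j k * A i k) - A j i * t) else 0) := by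
        intro j; split <;> ring
      simp only [h2]
      rw [Finset.sum_sub_distrib, Finset.sum_sub_distrib, Finset.sum_ite_eq']
      simp only [Finset.mem_univ, if_true]
      have e1 : ∑ j, A i j * A j i * t = r i * t := by
        rw [hrdef, Finset.sum_mul]
        exact Finset.sum_congr rfl fun j _ => by rw [hsym j i]; ring
      have e2 : ∑ k, A i k * A i k = r i := by
        rw [hrdef]; exact Finset.sum_congr rfl fun k _ => by ring
      have e3 : Q i = ∑ j, A i j * ∑ k, A j k * A i k := by
        rw [hQdef]
        exact Finset.sum_congr rfl fun j _ => by
          rw [Finset.mul_sum]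
          exact Finset.sum_congr rfl fun k _ => by ring
      rw [e1, e2, e3]; ring
    rw [hexp] at hx
    have hAii := hdiag i
    have h2t : 2 * t * r i = 2 * ((r i)^2 / A i i) := by
      rw [htdef]; field_simp
    have h2t2 : t^2 * A i i = (r i)^2 / A i i := by
      rw [htdef]; field_simp
    rw [h2t, h2t2] at hx
    have hle : (r i)^2 / A i i ≤ Q i := by linarith
    calc (r i)^2 = A i i * ((r i)^2 / A i i) := by field_simp
    _ ≤ A i i * Q i := mul_le_mul_of_nonneg_left hle hAii.le
  -- Frobenius norm of B i
  have hBF : ∀ i, (∑ j, ∑ k, (B i j k)^2)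
      = (∑ j, ∑ k, (A j k)^2) - 2 * (A i i)⁻¹ * Q i + (A i i)⁻¹^2 * (r i)^2 := by
    intro i
    have hb : ∀ j k, B i j k = A j k - (A i i)⁻¹ * (A i j * A i k) := by
      intro j k
      rw [hB i]
      simp [Matrix.vecMulVec_apply, Matrix.sub_apply]
    have expand : ∀ j k, (B i j k)^2
        = (A j k)^2 - 2 * (A i i)⁻¹ * (A i j * A j k * A i k)
          + (A i i)⁻¹^2 * ((A i j)^2 * (A i k)^2) := by
      intro j k; rw [hb]; ring
    have t1 : (∑ j, ∑ k, 2 * (A i i)⁻¹ * (A i j * A j k * A i k))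
        = 2 * (A i i)⁻¹ * Q i := by
      rw [hQdef]
      simp only [Finset.mul_sum]
    have e4 : (r i)^2 = ∑ j, ∑ k, (A i j)^2 * (A i k)^2 := by
      show (∑ j, (A i j)^2)^2 = _
      rw [sq]
      conv_lhs => rw [Finset.sum_mul_sum]
    have t2 : (∑ j, ∑ k, (A i i)⁻¹^2 * ((A i j)^2 * (A i k)^2))
        = (A i i)⁻¹^2 * (r i)^2 := by
      rw [e4]
      simp only [Finset.mul_sum]
    calc (∑ j, ∑ k, (B i j k)^2)
        = ∑ j, ∑ k, ((A j k)^2 - 2 * (A i i)⁻¹ * (A i j * A j k * A i k)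
            + (A i i)⁻¹^2 * ((A i j)^2 * (A i k)^2)) := by simp only [expand]
      _ = (∑ j, ∑ k, (A j k)^2) - (∑ j, ∑ k, 2 * (A i i)⁻¹ * (A i j * A j k * A i k))
            + (∑ j, ∑ k, (A i i)⁻¹^2 * ((A i j)^2 * (A i k)^2)) := by
          simp only [Finset.sum_add_distrib, Finset.sum_sub_distrib]
      _ = (∑ j, ∑ k, (A j k)^2) - 2 * (A i i)⁻¹ * Q i + (A i i)⁻¹^2 * (r i)^2 := by
          rw [t1, t2]
  -- pointwise bound
  have hpt : ∀ i, (∑ j, ∑ k, (B i j k)^2)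
      ≤ (∑ j, ∑ k, (A j k)^2) - (r i)^2 / (A i i)^2 := by
    intro i
    have hAii := hdiag i
    rw [hBF i]
    have h4 : (r i)^2 / (A i i)^2 = (A i i)⁻¹^2 * (r i)^2 := by
      rw [div_eq_mul_inv, ← inv_pow]; ring
    rw [h4]
    have h5 : (A i i)⁻¹^2 * (r i)^2 ≤ (A i i)⁻¹ * Q i := by
      calc (A i i)⁻¹^2 * (r i)^2 ≤ (A i i)⁻¹^2 * (A i i * Q i) :=
            mul_le_mul_of_nonneg_left (key i) (by positivity)
        _ = (A i i)⁻¹ * A i i * ((A i i)⁻¹ * Q i) := by ring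
        _ = (A i i)⁻¹ * Q i := by rw [inv_mul_cancel₀ hAii.ne']; ring
    linarith
  constructor
  · have hsum1 : ∑ i, (A i i)^2 / S = 1 := by
      rw [← Finset.sum_div, ← hSdef, div_self hSpos.ne']
    calc ∑ i, ((A i i)^2 / S) * (∑ j, ∑ k, (B i j k)^2)
        ≤ ∑ i, ((A i i)^2 / S) * ((∑ j, ∑ k, (A j k)^2) - (r i)^2 / (A i i)^2) := by
          apply Finset.sum_le_sum
          intro i _
          apply mul_le_mul_of_nonneg_left (hpt i)
          positivity
      _ = (∑ j, ∑ k, (A j k)^2) - (1 / S) * ∑ i, (r i)^2 := by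
          simp only [mul_sub]
          rw [Finset.sum_sub_distrib, ← Finset.sum_mul, hsum1, one_mul,
            Finset.mul_sum]
          congr 1
          apply Finset.sum_congr rfl
          intro i _
          have hAii := hdiag i
          field_simp
  · have hF : (∑ j, ∑ k, (A j k)^2) = ∑ i, r i := rfl
    have hSle : S ≤ ∑ i, r i := by
      apply Finset.sum_le_sum
      intro i _
      exact Finset.single_le_sum (f := fun k => (A i k)^2) (fun k _ => sq_nonneg _)
        (Finset.mem_univ i)
    have hCS : (∑ i, r i)^2 ≤ (n : ℝ) * ∑ i, (r i)^2 := by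
      have := sq_sum_le_card_mul_sum_sq (s := (Finset.univ : Finset (Fin n))) (f := r)
      simpa using this
    have hnpos : (0 : ℝ) < n := by exact_mod_cast hn
    rw [hF]
    have hrs : 0 < ∑ i, r i := lt_of_lt_of_le hSpos hSle
    have h : (1 / (n:ℝ)) * (∑ i, r i) ≤ (1 / S) * ∑ i, (r i)^2 := by
      rw [one_div, one_div, inv_mul_eq_div, inv_mul_eq_div,
        div_le_div_iff₀ hnpos hSpos]
      nlinarith [hCS, hSle, hrs]
    have e : (1 - 1 / (n:ℝ)) * (∑ i, r i) = (∑ i, r i) - (1/(n:ℝ)) * (∑ i, r i) := by ring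
    linarith
end

section
/- Let n ≥ 1 and let A ∈ ℝ^{n×n} be a symmetric positive-definite matrix with rows A_1, …, A_n. For each index i let B_i = A - (A_iᵀ A_i)/A_{ii}. Then Σ_{i=1}^n (A_{ii}² / Σ_{ℓ=1}^n A_{ℓℓ}²) ‖B_i‖_F² ≤ ‖A‖_F² - (1 / Σ_{ℓ=1}^n A_{ℓℓ}²) Σ_{i=1}^n A_{ii} · (A³)_{ii}, where (A³)_{ii} denotes the i-th diagonal entry of the matrix cube A³. -/
open Matrix in
theorem aux_cs (n : ℕ) (A : Matrix (Fin n) (Fin n) ℝ) (hA : A.PosDef) (i : Fin n) :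
    (∑ j, (A i j)^2)^2 ≤ A i i * ∑ j, ∑ k, A i j * A j k * A i k := by
  have hsym : ∀ j k, A j k = A k j := fun j k => by
    have := congrFun (congrFun hA.1 j) k
    simpa [Matrix.conjTranspose_apply] using this.symm
  set a : ℝ := A i i with ha
  set b : ℝ := ∑ j, (A i j)^2 with hb
  set c : ℝ := ∑ j, ∑ k, A i j * A j k * A i k with hc
  have hapos : 0 < a := by
    have := hA.dotProduct_mulVec_pos (x := Pi.single i 1) (by simp [Function.ne_iff])
    simpa [dotProduct, mulVec, Pi.single_apply, Finset.mul_sum] using this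
  set e : Fin n → ℝ := Pi.single i 1 with he
  set x : Fin n → ℝ := fun j => c * e j - b * A i j with hx
  have hev : ∀ (j : Fin n) (f : Fin n → ℝ), ∑ k, f k * e k = f i := by
    intro j f
    simp [he, Pi.single_apply, mul_ite, Finset.sum_ite_eq']
  have inner : ∀ j, (A *ᵥ x) j = c * A j i - b * ∑ k, A j k * A i k := by
    intro j
    simp only [mulVec, dotProduct, hx]
    have : (∑ k, A j k * (c * e k - b * A i k))
        = c * (∑ k, A j k * e k) - b * ∑ k, A j k * A i k := by
      simp only [Finset.mul_sum, ← Finset.sum_sub_distrib]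
      exact Finset.sum_congr rfl fun k _ => by ring
    rw [this, hev j (fun k => A j k)]
  have e1 : ∑ j, e j * A j i = a := by
    have := hev i (fun j => A j i)
    rw [ha, ← this]
    exact Finset.sum_congr rfl fun j _ => by ring
  have e2 : ∑ j, e j * ∑ k, A j k * A i k = b := by
    have := hev i (fun j => ∑ k, A j k * A i k)
    rw [hb]
    rw [show (∑ j, e j * ∑ k, A j k * A i k) = ∑ j, (∑ k, A j k * A i k) * e j from
      Finset.sum_congr rfl fun j _ => by ring, this]
    exact Finset.sum_congr rfl fun k _ => by ring
  have e3 : ∑ j, A i j * A j i = b := by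
    rw [hb]; exact Finset.sum_congr rfl fun j _ => by rw [hsym j i]; ring
  have e4 : ∑ j, A i j * ∑ k, A j k * A i k = c := by
    rw [hc]
    refine Finset.sum_congr rfl fun j _ => ?_
    rw [Finset.mul_sum]
    exact Finset.sum_congr rfl fun k _ => by ring
  have hq : x ⬝ᵥ A *ᵥ x = c * (c * a - b^2) := by
    calc x ⬝ᵥ A *ᵥ x
        = ∑ j, (c * e j - b * A i j) * (c * A j i - b * ∑ k, A j k * A i k) := by
          simp only [dotProduct, inner]; simp only [hx]
      _ = ∑ j, (c^2 * (e j * A j i) - c*b*(e j * ∑ k, A j k * A i k)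
            - b*c*(A i j * A j i) + b^2*(A i j * ∑ k, A j k * A i k)) :=
          Finset.sum_congr rfl fun j _ => by ring
      _ = c^2 * (∑ j, e j * A j i) - c*b*(∑ j, e j * ∑ k, A j k * A i k)
            - b*c*(∑ j, A i j * A j i) + b^2*(∑ j, A i j * ∑ k, A j k * A i k) := by
          simp only [Finset.sum_add_distrib, Finset.sum_sub_distrib, ← Finset.mul_sum]
      _ = c * (c * a - b^2) := by rw [e1, e2, e3, e4]; ring
  have hcpos : 0 < c := by
    have hAi : (A i : Fin n → ℝ) ≠ 0 := fun h => by
      have h2 : A i i = 0 := by rw [h]; rfl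
      exact hapos.ne' h2
    have := hA.dotProduct_mulVec_pos hAi
    simp only [star_trivial] at this
    have e : (A i) ⬝ᵥ A *ᵥ (A i) = c := by
      simp only [dotProduct, mulVec, hc, Finset.mul_sum]
      exact Finset.sum_congr rfl fun j _ => Finset.sum_congr rfl fun k _ => by ring
    rw [e] at this; exact this
  have h0 : 0 ≤ c * (c * a - b^2) := by
    have := hA.posSemidef.dotProduct_mulVec_nonneg x
    simp only [star_trivial] at this
    rw [hq] at this; exact this
  nlinarith [h0, hcpos]

/-- **Stronger intermediate Frobenius-norm contraction.**
For symmetric positive definite `A`, sampling pivot `i` with probability proportional to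
`A i i ^ 2`, the expected squared Frobenius norm of `B i = A - (A_iᵀ A_i)/A i i`
is at most `‖A‖_F² - (∑ i, A i i * (A³) i i) / (∑ ℓ, A ℓ ℓ ^ 2)`. -/
theorem frobenius_contraction_cube_bound (n : ℕ) (hn : 1 ≤ n)
    (A : Matrix (Fin n) (Fin n) ℝ) (hA : A.PosDef)
    (B : Fin n → Matrix (Fin n) (Fin n) ℝ)
    (hB : ∀ i, B i = A - (A i i)⁻¹ • Matrix.vecMulVec (A i) (A i)) :
    ∑ i, ((A i i) ^ 2 / ∑ ℓ, (A ℓ ℓ) ^ 2) * (∑ j, ∑ k, (B i j k) ^ 2)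
      ≤ (∑ j, ∑ k, (A j k) ^ 2)
        - (1 / ∑ ℓ, (A ℓ ℓ) ^ 2) * ∑ i, A i i * ((A ^ 3) i i) := by
  have hsym : ∀ j k, A j k = A k j := fun j k => by
    have := congrFun (congrFun hA.1 j) k
    simpa [Matrix.conjTranspose_apply] using this.symm
  have hapos : ∀ i, 0 < A i i := fun i => by
    have := hA.dotProduct_mulVec_pos (x := Pi.single i 1) (by simp [Function.ne_iff])
    simpa [dotProduct, Matrix.mulVec, Pi.single_apply, Finset.mul_sum] using this
  set b : Fin n → ℝ := fun i => ∑ j, (A i j)^2 with hb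
  set c : Fin n → ℝ := fun i => ∑ j, ∑ k, A i j * A j k * A i k with hc
  set S : ℝ := ∑ ℓ, (A ℓ ℓ)^2 with hS
  set F : ℝ := ∑ j, ∑ k, (A j k)^2 with hF
  have hSpos : 0 < S := by
    have : Nonempty (Fin n) := Fin.pos_iff_nonempty.mp hn
    exact Finset.sum_pos (fun i _ => pow_pos (hapos i) 2) Finset.univ_nonempty
  -- cube diagonal
  have hcube : ∀ i, (A ^ 3) i i = c i := by
    intro i
    rw [pow_succ, pow_succ, pow_one, Matrix.mul_apply]
    simp only [hc]
    rw [Finset.sum_comm]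
    refine Finset.sum_congr rfl fun j _ => ?_
    rw [Matrix.mul_apply, Finset.sum_mul]
    refine Finset.sum_congr rfl fun k _ => ?_
    rw [hsym j i]
  -- squared Frobenius norm of B i
  have hBnorm : ∀ i, ∑ j, ∑ k, (B i j k)^2
      = F - 2 * (A i i)⁻¹ * c i + ((A i i)⁻¹)^2 * (b i)^2 := by
    intro i
    have hBe : ∀ j k, B i j k = A j k - (A i i)⁻¹ * (A i j * A i k) := by
      intro j k
      rw [hB i]
      simp [Matrix.vecMulVec_apply, Matrix.sub_apply]
    have s3 : ∑ j, ((A i j)^2 * ∑ k, (A i k)^2) = (b i)^2 := by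
      rw [← Finset.sum_mul, sq]
    calc ∑ j, ∑ k, (B i j k)^2
        = ∑ j, ∑ k, ((A j k)^2 - (2 * (A i i)⁻¹) * (A i j * A j k * A i k)
            + (((A i i)⁻¹)^2) * ((A i j)^2 * (A i k)^2)) := by
          refine Finset.sum_congr rfl fun j _ => Finset.sum_congr rfl fun k _ => ?_
          rw [hBe j k]; ring
      _ = F - 2 * (A i i)⁻¹ * c i + ((A i i)⁻¹)^2 * (b i)^2 := by
          simp only [Finset.sum_add_distrib, Finset.sum_sub_distrib, ← Finset.mul_sum]
          rw [s3]
  have hkey : ∀ i, (b i)^2 ≤ A i i * c i := fun i => aux_cs n A hA i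
  have hterm : ∀ i, ((A i i)^2 / S) * (∑ j, ∑ k, (B i j k)^2)
      = (1/S) * ((A i i)^2 * F - 2 * (A i i * c i) + (b i)^2) := by
    intro i
    rw [hBnorm i]
    have hai : A i i ≠ 0 := (hapos i).ne'
    field_simp
  have hsum_sq : ∑ i, (b i)^2 ≤ ∑ i, A i i * c i :=
    Finset.sum_le_sum fun i _ => hkey i
  calc ∑ i, ((A i i)^2 / S) * (∑ j, ∑ k, (B i j k)^2)
      = ∑ i, (1/S) * ((A i i)^2 * F - 2 * (A i i * c i) + (b i)^2) :=
        Finset.sum_congr rfl fun i _ => hterm i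
    _ = (1/S) * (S * F - 2 * (∑ i, A i i * c i) + ∑ i, (b i)^2) := by
        rw [← Finset.mul_sum]
        congr 1
        rw [Finset.sum_add_distrib, Finset.sum_sub_distrib, ← Finset.sum_mul, ← Finset.mul_sum]
    _ ≤ (1/S) * (S * F - 2 * (∑ i, A i i * c i) + ∑ i, A i i * c i) := by
        have h1 : (0:ℝ) ≤ 1/S := by positivity
        apply mul_le_mul_of_nonneg_left _ h1
        linarith
    _ = F - (1/S) * ∑ i, A i i * c i := by
        field_simp
        ring
    _ = F - (1/S) * ∑ i, A i i * ((A ^ 3) i i) := by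
        congr 1
        rw [Finset.mul_sum, Finset.mul_sum]
        exact Finset.sum_congr rfl fun i _ => by rw [hcube i]
end

section
/- Let A ∈ ℝ^{n×n} be symmetric and positive semi-definite with rows A_1, …, A_n. Then for every index i with 1 ≤ i ≤ n, one has A_{ii} · (A³)_{ii} ≥ ‖A_i‖_{ℓ²}⁴. -/
/-- **Lemma 2.** For a symmetric positive semi-definite matrix `A` and any index `i`,
`A i i * (A³) i i ≥ ‖A_i‖_{ℓ²}⁴`. -/
theorem diag_mul_cube_diag_ge_row_norm_pow_four (n : ℕ)
    (A : Matrix (Fin n) (Fin n) ℝ) (hA : A.PosSemidef) (i : Fin n) :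
    (∑ k, (A i k) ^ 2) ^ 2 ≤ A i i * ((A ^ 3) i i) := by
  have hsym : ∀ j k, A j k = A k j := fun j k => by
    conv_lhs => rw [← hA.1]
    simp [Matrix.conjTranspose_apply]
  set x : Fin n → ℝ := fun k => A i k with hx
  have hc : (A ^ 3) i i = dotProduct x (A.mulVec x) := by
    simp only [pow_succ, pow_zero, Matrix.one_mul, Matrix.mul_apply, dotProduct,
      Matrix.mulVec, Finset.sum_mul, Finset.mul_sum]
    rw [Finset.sum_comm]
    apply Finset.sum_congr rfl; intro j _
    apply Finset.sum_congr rfl; intro k _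
    rw [hsym k i]; ring
  have key : ∀ t : ℝ, 0 ≤ A i i * (t * t) + (2 * ∑ k, (A i k) ^ 2) * t + (A ^ 3) i i := by
    intro t
    have h := hA.dotProduct_mulVec_nonneg (t • (Pi.single i 1 : Fin n → ℝ) + x)
    simp only [RCLike.star_def, dotProduct, Matrix.mulVec, Pi.add_apply, Pi.smul_apply,
      smul_eq_mul, starRingEnd_apply, star_trivial] at h
    rw [hc]
    simp only [dotProduct, Matrix.mulVec]
    calc (0:ℝ) ≤ _ := h
    _ = _ := by
      simp only [Finset.mul_sum, Finset.sum_mul, add_mul, mul_add, Finset.sum_add_distrib,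
        Pi.single_apply]
      simp only [mul_ite, mul_one, mul_zero, ite_mul, zero_mul, one_mul,
        Finset.sum_ite_eq, Finset.sum_ite_eq', Finset.mem_univ, if_true]
      have h3 : (∑ j : Fin n, ∑ k : Fin n, if j = i then t * (A j k * x k) else 0)
          = ∑ k : Fin n, t * (A i k * x k) := by
        rw [Finset.sum_comm]; simp
      rw [h3]
      have e1 : ∑ k, x k * (A k i * t) = ∑ k, A i k ^ 2 * t :=
        Finset.sum_congr rfl (fun k _ => by simp only [hx]; rw [hsym k i]; ring)
      have e2 : ∑ k, t * (A i k * x k) = ∑ k, A i k ^ 2 * t :=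
        Finset.sum_congr rfl (fun k _ => by simp only [hx]; ring)
      have e3 : ∑ k, 2 * A i k ^ 2 * t = (∑ k, A i k ^ 2 * t) + ∑ k, A i k ^ 2 * t := by
        rw [← Finset.sum_add_distrib]
        exact Finset.sum_congr rfl (fun k _ => by ring)
      rw [e1, e2, e3]; ring
  have hd := discrim_le_zero key
  rw [discrim] at hd
  nlinarith [hd]
end

section
/- Let A ∈ ℝ^{n×n} be symmetric and positive semi-definite with rows A_1, …, A_n, and let i be an index with A_{ii} ≠ 0. If B = A - (A_iᵀ A_i)/A_{ii}, then ‖B‖_F² ≤ ‖A‖_F² - ‖A_i‖_{ℓ²}⁴ / A_{ii}². -/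
/-- **Corollary 1, first inequality.** Removing the `i`-th row/column of a symmetric
positive semi-definite matrix `A` decreases the squared Frobenius norm by at least
`‖A_i‖_{ℓ²}⁴ / A i i ^ 2`. -/
theorem frobenius_decrease_after_pivot (n : ℕ)
    (A : Matrix (Fin n) (Fin n) ℝ) (hA : A.PosSemidef) (i : Fin n) (hi : A i i ≠ 0)
    (B : Matrix (Fin n) (Fin n) ℝ)
    (hB : B = A - (A i i)⁻¹ • Matrix.vecMulVec (A i) (A i)) :
    ∑ j, ∑ k, (B j k) ^ 2
      ≤ (∑ j, ∑ k, (A j k) ^ 2) - (∑ k, (A i k) ^ 2) ^ 2 / (A i i) ^ 2 := by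
  have hsym : ∀ j k, A j k = A k j := by
    intro j k
    simpa using hA.isHermitian.apply k j
  set d := A i i with hd
  set S := ∑ k, A i k ^ 2 with hS
  set Q := ∑ j, ∑ k, A i j * (A j k * A i k) with hQdef
  have hd0 : 0 ≤ d := by
    have h := hA.dotProduct_mulVec_nonneg (fun k => if k = i then (1:ℝ) else 0)
    simpa [dotProduct, Matrix.mulVec, mul_ite, ite_mul, Finset.sum_ite_eq,
      Finset.sum_ite_eq'] using h
  have hdpos : 0 < d := lt_of_le_of_ne hd0 (Ne.symm hi)
  -- Cauchy-Schwarz: S^2 * d ≤ d^2 * Q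
  have hCS : S ^ 2 * d ≤ d ^ 2 * Q := by
    set v : Fin n → ℝ := fun k => d * A i k - S * (if k = i then (1:ℝ) else 0) with hv
    have h := hA.dotProduct_mulVec_nonneg v
    have hv' : ∀ j k, v j * (A j k * v k)
        = d ^ 2 * (A i j * (A j k * A i k))
          - (d * S) * ((if j = i then (1:ℝ) else 0) * (A j k * A i k))
          - (d * S) * (A i j * (A j k * (if k = i then (1:ℝ) else 0)))
          + S ^ 2 * ((if j = i then (1:ℝ) else 0) * (A j k * (if k = i then (1:ℝ) else 0))) := by
      intro j k; simp only [hv]; ring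
    have e1 : ∑ j, A i j * ∑ k, A j k * A i k = Q := by
      rw [hQdef]; exact Finset.sum_congr rfl fun j _ => Finset.mul_sum _ _ _
    have e2 : ∑ j, (if j = i then (1:ℝ) else 0) * ∑ k, A j k * A i k = S := by
      simp [ite_mul, Finset.sum_ite_eq, hS, pow_two]
    have e3 : ∑ j, A i j * ∑ k, A j k * (if k = i then (1:ℝ) else 0) = S := by
      have hji : ∀ j, A j i = A i j := fun j => (hsym i j).symm
      simp [mul_ite, Finset.sum_ite_eq, hS, pow_two, hji]
    have e4 : ∑ j, (if j = i then (1:ℝ) else 0) * ∑ k, A j k * (if k = i then (1:ℝ) else 0) = d := by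
      simp [ite_mul, mul_ite, Finset.sum_ite_eq, hd]
    have hrw : dotProduct (star v) (A.mulVec v) = d ^ 2 * Q - (d * S) * S - (d * S) * S + S ^ 2 * d := by
      simp only [star_trivial, dotProduct, Matrix.mulVec, Finset.mul_sum]
      simp only [hv', Finset.sum_add_distrib, Finset.sum_sub_distrib, ← Finset.mul_sum]
      rw [e1, e2, e3, e4]
    rw [hrw] at h
    nlinarith
  have hBexp : ∀ j k, B j k = A j k - d⁻¹ * (A i j * A i k) := by
    intro j k
    simp [hB, Matrix.vecMulVec_apply, Matrix.sub_apply, Matrix.smul_apply, hd]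
  have hsum : ∑ j, ∑ k, (B j k) ^ 2
      = (∑ j, ∑ k, (A j k) ^ 2) - 2 * d⁻¹ * Q + d⁻¹ ^ 2 * (S * S) := by
    simp only [hBexp]
    have hpt : ∀ j k, (A j k - d⁻¹ * (A i j * A i k)) ^ 2
        = A j k ^ 2 - 2 * d⁻¹ * (A i j * (A j k * A i k))
          + d⁻¹ ^ 2 * (A i j ^ 2 * A i k ^ 2) := by intro j k; ring
    have e1 : ∑ j, A i j * ∑ k, A j k * A i k = Q := by
      rw [hQdef]; exact Finset.sum_congr rfl fun j _ => Finset.mul_sum _ _ _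
    have e5 : ∑ j, A i j ^ 2 * ∑ k, A i k ^ 2 = S * S := by
      rw [← Finset.sum_mul, hS]
    simp only [hpt, Finset.sum_add_distrib, Finset.sum_sub_distrib, ← Finset.mul_sum]
    rw [e1, e5]
  rw [hsum]
  have h3 : S ^ 2 ≤ d * Q := by
    have := (mul_le_mul_iff_of_pos_right hdpos).mp (by nlinarith : S ^ 2 * d ≤ (d * Q) * d)
    exact this
  have h4 : d⁻¹ * d = 1 := inv_mul_cancel₀ hi
  rw [div_eq_mul_inv, ← inv_pow]
  have h6 : S ^ 2 * d⁻¹ ^ 2 ≤ Q * d⁻¹ := by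
    calc S ^ 2 * d⁻¹ ^ 2 ≤ d * Q * d⁻¹ ^ 2 := mul_le_mul_of_nonneg_right h3 (sq_nonneg d⁻¹)
      _ = Q * d⁻¹ * (d * d⁻¹) := by ring
      _ = Q * d⁻¹ := by rw [mul_inv_cancel₀ hi, mul_one]
  linarith
end

section
/- Let A ∈ ℝ^{n×n} be symmetric and positive semi-definite with rows A_1, …, A_n, and let i be an index with A_{ii} ≠ 0. If B = A - (A_iᵀ A_i)/A_{ii}, then ‖B‖_F² ≤ ‖A‖_F² - A_{ii}². -/
open Matrix

/-- **Corollary 1, second inequality.** Removing the `i`-th row/column of a symmetric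
positive semi-definite matrix `A` decreases the squared Frobenius norm by at least
`A i i ^ 2`. -/
theorem frobenius_decrease_diag_sq (n : ℕ)
    (A : Matrix (Fin n) (Fin n) ℝ) (hA : A.PosSemidef) (i : Fin n) (hi : A i i ≠ 0)
    (B : Matrix (Fin n) (Fin n) ℝ)
    (hB : B = A - (A i i)⁻¹ • Matrix.vecMulVec (A i) (A i)) :
    ∑ j, ∑ k, (B j k) ^ 2 ≤ (∑ j, ∑ k, (A j k) ^ 2) - (A i i) ^ 2 := by
  subst hB
  set a := A i i with ha_def
  have hsym : ∀ j k, A j k = A k j := fun j k => by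
    have := congrFun (congrFun hA.1 j) k
    simpa [Matrix.conjTranspose_apply] using this.symm
  have ha_nonneg : 0 ≤ a := by
    have := hA.dotProduct_mulVec_nonneg (Pi.single i 1)
    simpa [dotProduct, Matrix.mulVec, Pi.single_apply] using this
  have ha : 0 < a := lt_of_le_of_ne ha_nonneg (Ne.symm hi)
  set t := ∑ j, (A i j) ^ 2 with ht_def
  set s := ∑ j, ∑ k, A i j * A j k * A i k with hs_def
  have hta : a ^ 2 ≤ t := by
    have := Finset.single_le_sum (f := fun j => (A i j) ^ 2)
      (fun j _ => sq_nonneg _) (Finset.mem_univ i)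
    simpa using this
  -- key quantities
  have hp1 : dotProduct (A i) (A *ᵥ A i) = s := by
    simp only [dotProduct, Matrix.mulVec, hs_def, Finset.mul_sum]
    exact Finset.sum_congr rfl fun j _ => Finset.sum_congr rfl fun k _ => by ring
  have hp2 : dotProduct (A i) (A *ᵥ Pi.single i 1) = t := by
    simp only [dotProduct, Matrix.mulVec, Pi.single_apply, ht_def]
    refine Finset.sum_congr rfl fun j _ => ?_
    simp [mul_ite, Finset.sum_ite_eq']
    rw [hsym j i]; ring
  have hp3 : dotProduct (Pi.single i 1) (A *ᵥ A i) = t := by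
    simp only [dotProduct, Matrix.mulVec, Pi.single_apply, ht_def]
    simp [ite_mul, Finset.sum_ite_eq', sq]
  have hp4 : dotProduct (Pi.single i 1) (A *ᵥ (Pi.single i 1)) = a := by
    simp only [dotProduct, Matrix.mulVec, Pi.single_apply]
    simp [ite_mul, mul_ite, Finset.sum_ite_eq', ha_def]
  -- Cauchy–Schwarz: t^2 ≤ a * s
  have hcs : t ^ 2 ≤ a * s := by
    have h0 := hA.dotProduct_mulVec_nonneg (a • A i - t • (Pi.single i 1 : Fin n → ℝ))
    simp only [star_trivial, Matrix.mulVec_sub, Matrix.mulVec_smul,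
      dotProduct_sub, sub_dotProduct, dotProduct_smul,
      smul_dotProduct, smul_eq_mul, hp1, hp2, hp3, hp4] at h0
    nlinarith [h0, ha]
  -- expand the left-hand side
  have hexp : ∑ j, ∑ k, ((A - a⁻¹ • Matrix.vecMulVec (A i) (A i)) j k) ^ 2
      = (∑ j, ∑ k, (A j k) ^ 2) - 2 * a⁻¹ * s + a⁻¹ ^ 2 * (t * t) := by
    have e1 : ∀ j k : Fin n, ((A - a⁻¹ • Matrix.vecMulVec (A i) (A i)) j k) ^ 2
        = (A j k) ^ 2 - 2 * a⁻¹ * (A i j * A j k * A i k)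
          + a⁻¹ ^ 2 * ((A i j) ^ 2 * (A i k) ^ 2) := by
      intro j k
      simp only [Matrix.sub_apply, Matrix.smul_apply, Matrix.vecMulVec_apply, smul_eq_mul]
      ring
    simp only [e1, Finset.sum_add_distrib, Finset.sum_sub_distrib, ← Finset.mul_sum,
      ← hs_def]
    congr 1
    rw [← Finset.sum_mul]
  rw [hexp]
  have key : a ^ 2 + a⁻¹ ^ 2 * (t * t) ≤ 2 * a⁻¹ * s := by
    rw [← sub_nonneg]
    have h : 2 * a⁻¹ * s - (a ^ 2 + a⁻¹ ^ 2 * (t * t)) = (2 * a * s - (a ^ 4 + t * t)) / a ^ 2 := by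
      field_simp
    rw [h]
    apply div_nonneg _ (sq_nonneg a)
    nlinarith [hcs, hta, sq_nonneg a, ha]
  linarith
end

section
/- Let n ≥ 1 and let A ∈ ℝ^{n×n} be a nonzero symmetric positive semi-definite matrix with rows A_1, …, A_n. Let i be an index with A_{ii} ≠ 0 that maximizes the quantity ‖A_j‖_{ℓ²}² / A_{jj} over all indices j with A_{jj} ≠ 0. Then the matrix B = A - (A_iᵀ A_i)/A_{ii} satisfies ‖B‖_F² ≤ (1 - 1/n) ‖A‖_F². -/
open Matrix Finset

lemma psd_cs {n : ℕ} {A : Matrix (Fin n) (Fin n) ℝ} (hA : A.PosSemidef)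
    (x y : Fin n → ℝ) :
    (x ⬝ᵥ A *ᵥ y) ^ 2 ≤ (x ⬝ᵥ A *ᵥ x) * (y ⬝ᵥ A *ᵥ y) := by
  have hAt : Aᵀ = A := by
    have := hA.1
    simpa [Matrix.IsHermitian] using this
  have hsym : ∀ u v : Fin n → ℝ, u ⬝ᵥ A *ᵥ v = v ⬝ᵥ A *ᵥ u := by
    intro u v
    rw [Matrix.dotProduct_mulVec, ← hAt, Matrix.vecMul_transpose, hAt,
      dotProduct_comm]
  have key : ∀ t : ℝ, 0 ≤ (y ⬝ᵥ A *ᵥ y) * (t * t) + (2 * (x ⬝ᵥ A *ᵥ y)) * t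
      + (x ⬝ᵥ A *ᵥ x) := by
    intro t
    have h0 := hA.dotProduct_mulVec_nonneg (x + t • y)
    simp only [star_trivial, Matrix.mulVec_add, Matrix.mulVec_smul,
      add_dotProduct, dotProduct_add, dotProduct_smul,
      smul_dotProduct, smul_eq_mul] at h0
    rw [hsym y x] at h0
    nlinarith [h0]
  have hd := discrim_le_zero key
  rw [discrim] at hd
  nlinarith [hd]

/-- **Corollary 2.** If the pivot `i` maximizes `‖A_j‖_{ℓ²}² / A j j` over all indices `j`
with nonzero diagonal entry, then one pivot step contracts the squared Frobenius norm
by the factor `1 - 1/n`. -/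
theorem frobenius_contraction_greedy_ratio (n : ℕ) (hn : 1 ≤ n)
    (A : Matrix (Fin n) (Fin n) ℝ) (hA : A.PosSemidef) (hA0 : A ≠ 0)
    (i : Fin n) (hi : A i i ≠ 0)
    (hmax : ∀ j, A j j ≠ 0 → (∑ k, (A j k) ^ 2) / A j j ≤ (∑ k, (A i k) ^ 2) / A i i)
    (B : Matrix (Fin n) (Fin n) ℝ)
    (hB : B = A - (A i i)⁻¹ • Matrix.vecMulVec (A i) (A i)) :
    ∑ j, ∑ k, (B j k) ^ 2 ≤ (1 - 1 / (n : ℝ)) * ∑ j, ∑ k, (A j k) ^ 2 := by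
  have hentry : ∀ j k : Fin n,
      (Pi.single j 1 : Fin n → ℝ) ⬝ᵥ A *ᵥ (Pi.single k 1 : Fin n → ℝ) = A j k := by
    intro j k; simp [Matrix.mulVec_single, single_dotProduct]
  have hdiag : ∀ j : Fin n, 0 ≤ A j j := by
    intro j
    have := hA.dotProduct_mulVec_nonneg (Pi.single j 1)
    simpa [hentry j j] using this
  have hd0 : 0 < A i i := lt_of_le_of_ne (hdiag i) (Ne.symm hi)
  have hzero : ∀ j k : Fin n, A j j = 0 → A j k = 0 := by
    intro j k hjj
    have h := psd_cs hA (Pi.single j 1) (Pi.single k 1)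
    rw [hentry, hentry, hentry, hjj] at h
    nlinarith [sq_nonneg (A j k)]
  set d := A i i with hdd
  set s := ∑ k, (A i k) ^ 2 with hs
  set S := ∑ j, ∑ k, (A j k) ^ 2 with hS
  set tr := ∑ j, A j j with htr
  set q := (A i) ⬝ᵥ A *ᵥ (A i) with hq
  have hs0 : 0 ≤ s := Finset.sum_nonneg fun k _ => sq_nonneg _
  have htr0 : 0 ≤ tr := Finset.sum_nonneg fun j _ => hdiag j
  -- CS: s^2 ≤ d * q
  have hcs : s ^ 2 ≤ d * q := by
    have h := psd_cs hA (Pi.single i 1) (A i)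
    rw [hentry i i] at h
    have h2 : (Pi.single i 1 : Fin n → ℝ) ⬝ᵥ A *ᵥ (A i) = s := by
      simp only [single_dotProduct, Matrix.mulVec, dotProduct,
        one_mul, hs, sq]
      simp [Pi.single_apply, ite_mul]
    rw [h2] at h
    exact h
  -- Frobenius norm of B
  have hBsum : ∑ j, ∑ k, (B j k) ^ 2 = S - 2 * d⁻¹ * q + d⁻¹ ^ 2 * s ^ 2 := by
    subst hB
    have expand : ∀ j k : Fin n,
        ((A - d⁻¹ • Matrix.vecMulVec (A i) (A i)) j k) ^ 2
        = (A j k) ^ 2 - 2 * d⁻¹ * (A i j * (A j k * A i k))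
          + d⁻¹ ^ 2 * ((A i j) ^ 2 * (A i k) ^ 2) := by
      intro j k
      simp only [Matrix.sub_apply, Matrix.smul_apply, Matrix.vecMulVec_apply,
        smul_eq_mul]
      ring
    simp_rw [expand, Finset.sum_add_distrib, Finset.sum_sub_distrib,
      ← Finset.mul_sum]
    have hq' : ∑ j, A i j * ∑ k, A j k * A i k = q := by
      rw [hq]
      simp only [dotProduct, Matrix.mulVec]
    have hs2 : ∑ j, (A i j) ^ 2 * ∑ k, (A i k) ^ 2 = s ^ 2 := by
      rw [← Finset.sum_mul, ← hs, sq]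
    rw [hq', hs2]
  -- q ≥ s²/d  ⇒  ‖B‖² ≤ S - (s/d)²
  have hinv0 : 0 < d⁻¹ := inv_pos.mpr hd0
  have hBle : ∑ j, ∑ k, (B j k) ^ 2 ≤ S - (s / d) ^ 2 := by
    rw [hBsum, div_pow]
    have e1 : s ^ 2 / d ^ 2 = d⁻¹ ^ 2 * s ^ 2 := by
      field_simp
    rw [e1]
    have h3 : d⁻¹ ^ 2 * s ^ 2 ≤ d⁻¹ * q := by
      have := mul_le_mul_of_nonneg_left hcs (le_of_lt (mul_pos hinv0 hinv0))
      calc d⁻¹ ^ 2 * s ^ 2 ≤ d⁻¹ ^ 2 * (d * q) := by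
            exact mul_le_mul_of_nonneg_left hcs (by positivity)
        _ = d⁻¹ * q := by
            field_simp
    linarith
  -- S ≤ (s/d) * tr
  have hStr : S ≤ s / d * tr := by
    rw [hS, htr, Finset.mul_sum]
    apply Finset.sum_le_sum
    intro j _
    by_cases hjj : A j j = 0
    · have : ∀ k, A j k = 0 := fun k => hzero j k hjj
      simp [this, hjj]
    · have hjj0 : 0 < A j j := lt_of_le_of_ne (hdiag j) (Ne.symm hjj)
      have := hmax j hjj
      rw [div_le_div_iff₀ hjj0 hd0] at this
      have e : s / d * A j j * d = s * A j j := by field_simp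
      nlinarith [this, hd0, e]
  -- tr² ≤ n * S
  have hdiagS : ∑ j, (A j j) ^ 2 ≤ S := by
    apply Finset.sum_le_sum
    intro j _
    exact Finset.single_le_sum (f := fun k => (A j k) ^ 2)
      (fun k _ => sq_nonneg _) (Finset.mem_univ j)
  have htrsq : tr ^ 2 ≤ (n : ℝ) * S := by
    have h := sq_sum_le_card_mul_sum_sq (s := (Finset.univ : Finset (Fin n)))
      (f := fun j => A j j)
    simp only [Finset.card_univ, Fintype.card_fin] at h
    calc tr ^ 2 ≤ (n : ℝ) * ∑ j, (A j j) ^ 2 := h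
      _ ≤ (n : ℝ) * S := by
          apply mul_le_mul_of_nonneg_left hdiagS (by positivity)
  -- S > 0
  have hSpos : 0 < S := by
    have h1 : d ^ 2 ≤ s := by
      rw [hs, hdd]
      exact Finset.single_le_sum (f := fun k => (A i k) ^ 2)
        (fun k _ => sq_nonneg _) (Finset.mem_univ i)
    have h2 : s ≤ S := by
      rw [hS]
      exact Finset.single_le_sum (f := fun j => ∑ k, (A j k) ^ 2)
        (fun j _ => Finset.sum_nonneg fun k _ => sq_nonneg _) (Finset.mem_univ i)
    nlinarith
  -- finish
  have hn' : (0:ℝ) < n := by exact_mod_cast hn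
  set r := s / d with hr
  have hr0 : 0 ≤ r := div_nonneg hs0 hd0.le
  have hS2 : S * S ≤ r ^ 2 * ((n : ℝ) * S) := by
    calc S * S ≤ (r * tr) * (r * tr) := by
          exact mul_le_mul hStr hStr hSpos.le (by positivity)
      _ = r ^ 2 * tr ^ 2 := by ring
      _ ≤ r ^ 2 * ((n : ℝ) * S) := by
          exact mul_le_mul_of_nonneg_left htrsq (by positivity)
  have hSle : S ≤ r ^ 2 * n := by
    have := (mul_le_mul_iff_of_pos_right hSpos).mp (by linarith [hS2] : S * S ≤ r ^ 2 * (n : ℝ) * S)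
    exact this
  have hfin : S / n ≤ r ^ 2 := by
    rw [div_le_iff₀ hn']
    linarith
  calc ∑ j, ∑ k, (B j k) ^ 2 ≤ S - r ^ 2 := hBle
    _ ≤ S - S / n := by linarith
    _ = (1 - 1 / (n : ℝ)) * S := by ring
end

section
/- Let n ≥ 1 and let A ∈ ℝ^{n×n} be a nonzero symmetric positive semi-definite matrix with rows A_1, …, A_n. Then there exists an index i with A_{ii} ≠ 0 such that ‖A_i‖_{ℓ²}⁴ / A_{ii}² ≥ ‖A‖_F² / n. -/
lemma psd_row_zero {n : ℕ} {A : Matrix (Fin n) (Fin n) ℝ} (hA : A.PosSemidef)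
    {i : Fin n} (h : A i i = 0) (k : Fin n) : A i k = 0 := by
  obtain ⟨B, rfl⟩ : ∃ B : Matrix (Fin n) (Fin n) ℝ, A = Matrix.conjTranspose B * B := by
    open MatrixOrder in exact CStarAlgebra.nonneg_iff_eq_star_mul_self.mp hA.nonneg
  simp only [Matrix.mul_apply, Matrix.conjTranspose_apply, RCLike.star_def,
    starRingEnd_apply, star_trivial] at h ⊢
  have hz : ∀ m, B m i = 0 := by
    intro m
    have := (Finset.sum_eq_zero_iff_of_nonneg (fun m _ => mul_self_nonneg (B m i))).mp h m
      (Finset.mem_univ m)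
    exact mul_self_eq_zero.mp this
  simp [hz]

/-- For a nonzero symmetric positive semi-definite matrix `A`, there is an index `i`
with `A i i ≠ 0` such that `‖A_i‖_{ℓ²}⁴ / A i i ^ 2 ≥ ‖A‖_F² / n`. -/
theorem exists_good_pivot (n : ℕ) (hn : 1 ≤ n)
    (A : Matrix (Fin n) (Fin n) ℝ) (hA : A.PosSemidef) (hA0 : A ≠ 0) :
    ∃ i, A i i ≠ 0 ∧
      (∑ j, ∑ k, (A j k) ^ 2) / (n : ℝ) ≤ (∑ k, (A i k) ^ 2) ^ 2 / (A i i) ^ 2 := by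
  have hne : (Finset.univ : Finset (Fin n)).Nonempty := by
    simpa [Finset.univ_nonempty_iff] using Fin.pos_iff_nonempty.mp hn
  obtain ⟨i, -, hi⟩ := Finset.exists_max_image Finset.univ (fun j => ∑ k, (A j k) ^ 2) hne
  have hmax : ∀ j, ∑ k, (A j k) ^ 2 ≤ ∑ k, (A i k) ^ 2 := fun j => hi j (Finset.mem_univ j)
  -- f i > 0
  have hfA : ∃ j k, A j k ≠ 0 := by
    by_contra hc
    push_neg at hc
    exact hA0 (by ext j k; simpa using hc j k)
  obtain ⟨j, k, hjk⟩ := hfA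
  have hfi : 0 < ∑ k, (A i k) ^ 2 := by
    have h1 : (A j k) ^ 2 ≤ ∑ k, (A j k) ^ 2 :=
      Finset.single_le_sum (fun l _ => sq_nonneg (A j l)) (Finset.mem_univ k)
    have := (pow_pos (abs_pos.mpr hjk) 2)
    nlinarith [hmax j, sq_abs (A j k)]
  have hii : A i i ≠ 0 := by
    intro h0
    have : ∀ l, A i l = 0 := psd_row_zero hA h0
    simp [this] at hfi
  refine ⟨i, hii, ?_⟩
  have hii2 : 0 < (A i i) ^ 2 := lt_of_le_of_ne (sq_nonneg _) (Ne.symm (pow_ne_zero 2 hii))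
  have hnpos : (0 : ℝ) < n := by exact_mod_cast hn
  rw [div_le_div_iff₀ hnpos hii2]
  have hsum : (∑ j, ∑ k, (A j k) ^ 2) ≤ n * ∑ k, (A i k) ^ 2 := by
    calc (∑ j, ∑ k, (A j k) ^ 2) ≤ ∑ _j : Fin n, ∑ k, (A i k) ^ 2 :=
          Finset.sum_le_sum fun j _ => hmax j
      _ = n * ∑ k, (A i k) ^ 2 := by simp [Finset.sum_const, nsmul_eq_mul]
  have hdiag : (A i i) ^ 2 ≤ ∑ k, (A i k) ^ 2 :=
    Finset.single_le_sum (fun l _ => sq_nonneg (A i l)) (Finset.mem_univ i)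
  calc (∑ j, ∑ k, (A j k) ^ 2) * (A i i) ^ 2
      ≤ ((n : ℝ) * ∑ k, (A i k) ^ 2) * ∑ k, (A i k) ^ 2 :=
        mul_le_mul hsum hdiag (sq_nonneg _) (by positivity)
    _ = (∑ k, (A i k) ^ 2) ^ 2 * n := by ring
end

section
/- Let n ≥ 1 and let A ∈ ℝ^{n×n} be a symmetric positive-definite matrix with rows A_1, …, A_n, and for each index i let B_i = A - (A_iᵀ A_i)/A_{ii}. Then the expected trace under adaptive random pivoting satisfies Σ_{i=1}^n (A_{ii}/tr(A)) · tr(B_i) = (1 - tr(A²)/tr(A)²) · tr(A), and this quantity is at most (1 - 1/n) · tr(A). -/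
/-- **Expected trace under adaptive random pivoting (β = 1).**
For symmetric positive definite `A`, the expected trace of the residual satisfies
`∑ i (A i i / tr A) tr (B i) = (1 - tr(A²)/tr(A)²) tr A ≤ (1 - 1/n) tr A`. -/
theorem expected_trace_adaptive_pivoting (n : ℕ) (hn : 1 ≤ n)
    (A : Matrix (Fin n) (Fin n) ℝ) (hA : A.PosDef)
    (B : Fin n → Matrix (Fin n) (Fin n) ℝ)
    (hB : ∀ i, B i = A - (A i i)⁻¹ • Matrix.vecMulVec (A i) (A i)) :
    (∑ i, (A i i / A.trace) * (B i).trace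
        = (1 - (A ^ 2).trace / A.trace ^ 2) * A.trace) ∧
    (1 - (A ^ 2).trace / A.trace ^ 2) * A.trace ≤ (1 - 1 / (n : ℝ)) * A.trace := by
  have hsymm : ∀ i j, A j i = A i j := fun i j => by
    have := hA.1; rw [Matrix.IsHermitian] at this
    conv_lhs => rw [← this]
    simp [Matrix.conjTranspose_apply]
  have hdiag : ∀ i, 0 < A i i := fun i => by
    exact hA.diag_pos
  have htr : 0 < A.trace := by
    rw [Matrix.trace]
    exact Finset.sum_pos (fun i _ => hdiag i) (by
      simp [Finset.univ_nonempty_iff]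
      exact Fin.pos_iff_nonempty.mp hn)
  -- trace of B i
  have hsq : ∀ i, (A ^ 2) i i = ∑ j, A i j ^ 2 := fun i => by
    simp [pow_two, Matrix.mul_apply, hsymm, sq]
  have htrB : ∀ i, (B i).trace = A.trace - (A i i)⁻¹ * (A ^ 2) i i := fun i => by
    rw [hB i, Matrix.trace_sub, Matrix.trace_smul, hsq]
    congr 1
    simp only [Matrix.trace, Matrix.diag_apply, Matrix.vecMulVec_apply, smul_eq_mul,
      Finset.mul_sum]
    congr 1; ext j; ring
  have htrAsq : (A ^ 2).trace = ∑ i, (A ^ 2) i i := rfl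
  constructor
  · have : ∑ i, (A i i / A.trace) * (B i).trace
        = ∑ i, (A i i - (A ^ 2) i i / A.trace) := by
      apply Finset.sum_congr rfl
      intro i _
      rw [htrB i]
      have h1 := (hdiag i).ne'
      have h2 := htr.ne'
      field_simp
    rw [this, Finset.sum_sub_distrib, ← Finset.sum_div, ← htrAsq]
    have : ∑ i, A i i = A.trace := rfl
    rw [this]
    field_simp
  · -- need tr(A^2) ≥ tr(A)^2 / n
    have key : A.trace ^ 2 ≤ n * (A ^ 2).trace := by
      have h1 : A.trace ^ 2 ≤ n * ∑ i, A i i ^ 2 := by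
        have := sq_sum_le_card_mul_sum_sq (s := Finset.univ) (f := fun i => A i i)
        simpa [Matrix.trace, Matrix.diag_apply] using this
      refine h1.trans (mul_le_mul_of_nonneg_left ?_ (Nat.cast_nonneg n))
      rw [htrAsq]
      apply Finset.sum_le_sum
      intro i _
      rw [hsq i]
      exact Finset.single_le_sum (f := fun j => A i j ^ 2) (fun j _ => sq_nonneg _)
        (Finset.mem_univ i)
    have hn' : (0 : ℝ) < n := by positivity
    rw [mul_le_mul_iff_of_pos_right htr, sub_le_sub_iff_left, div_le_div_iff₀ hn' (by positivity)]
    linarith [key]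
end

section
/- Let A ∈ ℝ^{n×n} be symmetric and positive semi-definite with rows A_1, …, A_n, and let i be an index with A_{ii} > 0. Then the matrix B = A - (A_iᵀ A_i)/A_{ii} is symmetric and positive semi-definite. -/
open scoped Matrix


/-- One step of partial Cholesky pivoting preserves (symmetry and) positive
semi-definiteness of the residual. -/
theorem pivot_step_posSemidef (n : ℕ)
    (A : Matrix (Fin n) (Fin n) ℝ) (hA : A.PosSemidef) (i : Fin n) (hi : 0 < A i i)
    (B : Matrix (Fin n) (Fin n) ℝ)
    (hB : B = A - (A i i)⁻¹ • Matrix.vecMulVec (A i) (A i)) :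
    B.PosSemidef := by
  subst hB
  obtain ⟨hAh, hApos⟩ := Matrix.posSemidef_iff_dotProduct_mulVec.mp hA
  have hsym : ∀ j k, A j k = A k j := fun j k => by
    conv_lhs => rw [← hAh]
    simp [Matrix.conjTranspose_apply]
  have hne : A i i ≠ 0 := ne_of_gt hi
  rw [Matrix.posSemidef_iff_dotProduct_mulVec]
  constructor
  · ext j k
    simp only [Matrix.conjTranspose_apply, Matrix.sub_apply, Matrix.smul_apply,
      Matrix.vecMulVec_apply, star_sub, star_mul', smul_eq_mul, star_trivial]
    rw [hsym k j, hsym i k, hsym i j]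
    ring
  · intro x
    set e : Fin n → ℝ := Pi.single i (1 : ℝ) with he
    set s : ℝ := A i ⬝ᵥ x with hs
    set c : ℝ := (A i i)⁻¹ * s with hc
    set y : Fin n → ℝ := x - c • e with hy
    have hAe : A *ᵥ e = fun j => A j i := by
      funext j
      simp [he, Matrix.mulVec, dotProduct_single]
    have hxAe : x ⬝ᵥ (A *ᵥ e) = s := by
      rw [hAe, hs, dotProduct, dotProduct]
      exact Finset.sum_congr rfl fun j _ => by rw [hsym j i]; ring
    have heAx : e ⬝ᵥ (A *ᵥ x) = s := by
      simp [he, single_dotProduct, Matrix.mulVec, hs]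
    have heAe : e ⬝ᵥ (A *ᵥ e) = A i i := by
      rw [hAe]; simp [he, single_dotProduct]
    have hyy : y ⬝ᵥ (A *ᵥ y) = x ⬝ᵥ (A *ᵥ x) - s ^ 2 / A i i := by
      rw [hy]
      simp only [Matrix.mulVec_sub, Matrix.mulVec_smul, sub_dotProduct,
        dotProduct_sub, smul_dotProduct, dotProduct_smul,
        hxAe, heAx, heAe, smul_eq_mul, hc]
      field_simp
      ring
    have h0 := hApos y
    simp only [star_trivial] at h0 ⊢
    have hBx : x ⬝ᵥ ((A - (A i i)⁻¹ • Matrix.vecMulVec (A i) (A i)) *ᵥ x)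
        = x ⬝ᵥ (A *ᵥ x) - s ^ 2 / A i i := by
      rw [Matrix.sub_mulVec, dotProduct_sub, Matrix.smul_mulVec,
        dotProduct_smul]
      have hvv : Matrix.vecMulVec (A i) (A i) *ᵥ x = s • A i := by
        funext j
        simp only [Matrix.mulVec, Matrix.vecMulVec_apply, dotProduct,
          Pi.smul_apply, smul_eq_mul, Finset.mul_sum, hs]
        rw [Finset.sum_mul]
        exact Finset.sum_congr rfl fun k _ => by ring
      rw [hvv, dotProduct_smul, smul_eq_mul, smul_eq_mul,
        dotProduct_comm x (A i), ← hs]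
      field_simp
    rw [hBx, ← hyy]
    exact h0
end
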